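/- Let a_n > 0 and u_n = sqrt(a_1 + sqrt(a_2 + ... + sqrt(a_n))). Then for every n ≥ 1, u_{n+1} - u_n ≤ sqrt(a_{n+1}) / (2^n · ∏_{i=1}^n sqrt(a_i + sqrt(a_{i+1} + ... + sqrt(a_n)))), where the i-th factor in the product is the nested square root starting at a_i and ending at a_n. -/

import Mathlib

/-- `nest a n i = sqrt (a i + sqrt (a (i+1) + ⋯ + sqrt (a n)))`;
the `n`-th approximant `u n` of the continued square root is `nest a n 1`. -/
noncomputable def nest (a : ℕ → ℝ) (n : ℕ) : ℕ → ℝ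
  | i => if _ : i ≤ n then Real.sqrt (a i + nest a n (i + 1)) else 0
termination_by i => n + 1 - i
decreasing_by omega

lemma nest_of_le (a : ℕ → ℝ) {n i : ℕ} (h : i ≤ n) :
    nest a n i = Real.sqrt (a i + nest a n (i + 1)) := by
  rw [nest, dif_pos h]

lemma nest_of_gt (a : ℕ → ℝ) {n i : ℕ} (h : n < i) : nest a n i = 0 := by
  rw [nest, dif_neg (by omega)]

lemma nest_nonneg (a : ℕ → ℝ) (n i : ℕ) : 0 ≤ nest a n i := by
  rw [nest]
  split
  · exact Real.sqrt_nonneg _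
  · exact le_refl 0

lemma nest_pos (a : ℕ → ℝ) (ha : ∀ n, 1 ≤ n → 0 < a n) (n i : ℕ) (h1 : 1 ≤ i) (h2 : i ≤ n) :
    0 < nest a n i := by
  rw [nest_of_le a h2]
  exact Real.sqrt_pos.mpr (by have := ha i h1; have := nest_nonneg a n (i + 1); linarith)

lemma nest_mono (a : ℕ → ℝ) (n i : ℕ) : nest a n i ≤ nest a (n + 1) i := by
  rcases le_or_gt i n with h | h
  · rw [nest_of_le a h, nest_of_le a (show i ≤ n + 1 by omega)]
    have := nest_mono a n (i + 1)
    exact Real.sqrt_le_sqrt (by linarith)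
  · rw [nest_of_gt a h]
    exact nest_nonneg _ _ _
termination_by n + 2 - i
decreasing_by omega

/-- `sqrt X - sqrt Y ≤ (X - Y) / (2 sqrt Y)` for `0 < Y ≤ X`. -/
lemma sqrt_sub_sqrt_le (X Y : ℝ) (hY : 0 < Y) (hXY : Y ≤ X) :
    Real.sqrt X - Real.sqrt Y ≤ (X - Y) / (2 * Real.sqrt Y) := by
  have hsY : 0 < Real.sqrt Y := Real.sqrt_pos.mpr hY
  have hd : 0 ≤ (X - Y) / (2 * Real.sqrt Y) := div_nonneg (by linarith) (by positivity)
  have key : Real.sqrt X ≤ Real.sqrt Y + (X - Y) / (2 * Real.sqrt Y) := by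
    have h2 : X ≤ (Real.sqrt Y + (X - Y) / (2 * Real.sqrt Y)) ^ 2 := by
      have hsq : Real.sqrt Y ^ 2 = Y := Real.sq_sqrt hY.le
      have hprod : Real.sqrt Y * ((X - Y) / (2 * Real.sqrt Y)) = (X - Y) / 2 := by
        field_simp
      have hd2 : 0 ≤ ((X - Y) / (2 * Real.sqrt Y)) ^ 2 := sq_nonneg _
      nlinarith
    calc Real.sqrt X ≤ Real.sqrt ((Real.sqrt Y + (X - Y) / (2 * Real.sqrt Y)) ^ 2) :=
          Real.sqrt_le_sqrt h2
      _ = Real.sqrt Y + (X - Y) / (2 * Real.sqrt Y) := Real.sqrt_sq (by positivity)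
  linarith

theorem herschfeld_inequality (a : ℕ → ℝ) (ha : ∀ n, 1 ≤ n → 0 < a n) :
    ∀ n, 1 ≤ n →
      nest a (n + 1) 1 - nest a n 1 ≤
        Real.sqrt (a (n + 1)) / (2 ^ n * ∏ i ∈ Finset.Icc 1 n, nest a n i) := by
  intro n hn
  suffices H : ∀ k, ∀ i, 1 ≤ i → i + k = n + 1 →
      nest a (n + 1) i - nest a n i ≤
        Real.sqrt (a (n + 1)) / (2 ^ k * ∏ j ∈ Finset.Icc i n, nest a n j) by
    have := H n 1 le_rfl (by omega)
    simpa using this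
  intro k
  induction k with
  | zero =>
    intro i h1 hik
    have hi : i = n + 1 := by omega
    subst hi
    rw [nest_of_le a (le_refl (n + 1)), nest_of_gt a (show n + 1 < n + 2 by omega),
      nest_of_gt a (show n < n + 1 by omega)]
    simp [Finset.Icc_eq_empty_of_lt (by omega : n < n + 1)]
  | succ k ihk =>
    intro i h1 hik
    have hin : i ≤ n := by omega
    have hrec := ihk (i + 1) (by omega) (by omega)
    set S := Real.sqrt (a (n + 1)) with hS
    have hSnn : 0 ≤ S := Real.sqrt_nonneg _
    have hti : 0 < nest a n i := nest_pos a ha n i h1 hin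
    have hP : 0 < ∏ j ∈ Finset.Icc (i + 1) n, nest a n j := by
      apply Finset.prod_pos
      intro j hj
      rw [Finset.mem_Icc] at hj
      exact nest_pos a ha n j (by omega) hj.2
    have hb : nest a n (i + 1) ≤ nest a (n + 1) (i + 1) := nest_mono a n (i + 1)
    have hbnn : 0 ≤ nest a n (i + 1) := nest_nonneg a n (i + 1)
    have hY : 0 < a i + nest a n (i + 1) := by have := ha i h1; linarith
    have hXY : a i + nest a n (i + 1) ≤ a i + nest a (n + 1) (i + 1) := by linarith
    have hsqY : Real.sqrt (a i + nest a n (i + 1)) = nest a n i := (nest_of_le a hin).symm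
    have step : nest a (n + 1) i - nest a n i ≤
        (nest a (n + 1) (i + 1) - nest a n (i + 1)) / (2 * nest a n i) := by
      have h0 := sqrt_sub_sqrt_le _ _ hY hXY
      rw [hsqY] at h0
      rw [nest_of_le a (show i ≤ n + 1 by omega)]
      calc Real.sqrt (a i + nest a (n + 1) (i + 1)) - nest a n i
          ≤ (a i + nest a (n + 1) (i + 1) - (a i + nest a n (i + 1))) / (2 * nest a n i) := h0
        _ = (nest a (n + 1) (i + 1) - nest a n (i + 1)) / (2 * nest a n i) := by ring_nf
    have step2 : (nest a (n + 1) (i + 1) - nest a n (i + 1)) / (2 * nest a n i) ≤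
        (S / (2 ^ k * ∏ j ∈ Finset.Icc (i + 1) n, nest a n j)) / (2 * nest a n i) :=
      div_le_div_of_nonneg_right hrec (by positivity)
    have hprodsplit : ∏ j ∈ Finset.Icc i n, nest a n j =
        nest a n i * ∏ j ∈ Finset.Icc (i + 1) n, nest a n j := by
      rw [Finset.Icc_add_one_left_eq_Ioc, Finset.mul_prod_Ioc_eq_prod_Icc hin]
    calc nest a (n + 1) i - nest a n i
        ≤ (nest a (n + 1) (i + 1) - nest a n (i + 1)) / (2 * nest a n i) := step
      _ ≤ (S / (2 ^ k * ∏ j ∈ Finset.Icc (i + 1) n, nest a n j)) / (2 * nest a n i) := step2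
      _ = S / (2 ^ (k + 1) * ∏ j ∈ Finset.Icc i n, nest a n j) := by
          rw [div_div, hprodsplit]
          congr 1
          ring
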